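/- Let (X_i)_{i ≥ 1} be i.i.d. real random variables and set S_n = ∑_{i=1}^n X_i. For s > 0 define the first passage time T(s) = inf{ n ≥ 1 : s + S_n ≤ 0 } (with inf ∅ = ∞). Then for every λ ≥ 0, every s₀ > 0 and every integer k ≥ 1, E[ e^{λ T(k s₀)} ] ≤ ( E[ e^{λ T(s₀)} ] )^k, with the convention e^{λ·∞} = ∞. -/

import Mathlib

open MeasureTheory ProbabilityTheory
open scoped ENNReal Classical

/-- `exp(λ T(s))` (valued in `ℝ≥0∞`, with `e^{λ·∞} = ∞`), where
`T(s) = inf{ n ≥ 1 : s + S_n ≤ 0 }` is the first passage time below `0` of the walk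
`S` started from level `s` (`T(s) = ∞` if the walk never passes below `0`). -/
noncomputable def expPassage {Ω : Type*} (lam : ℝ) (S : ℕ → Ω → ℝ) (s : ℝ)
    (ω : Ω) : ℝ≥0∞ :=
  if h : ∃ n : ℕ, 1 ≤ n ∧ s + S n ω ≤ 0
  then ENNReal.ofReal (Real.exp (lam * (Nat.find h : ℝ)))
  else ⊤

namespace FPaux

variable {Ω : Type*}

/-- The walk with increments `X c, X (c+1), ...`. -/
noncomputable def walk (X : ℕ → Ω → ℝ) (c : ℕ) (n : ℕ) (ω : Ω) : ℝ :=
  ∑ i ∈ Finset.range n, X (c + i) ω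

/-- The event `T(s) = n`. -/
def passEvent (S : ℕ → Ω → ℝ) (s : ℝ) (n : ℕ) : Set Ω :=
  {ω | (1 ≤ n ∧ s + S n ω ≤ 0) ∧ ∀ m < n, ¬ (1 ≤ m ∧ s + S m ω ≤ 0)}

/-- The event `T(s) = ∞`. -/
def noPass (S : ℕ → Ω → ℝ) (s : ℝ) : Set Ω :=
  {ω | ¬ ∃ n : ℕ, 1 ≤ n ∧ s + S n ω ≤ 0}

lemma expPassage_eq (lam : ℝ) (S : ℕ → Ω → ℝ) (s : ℝ) (ω : Ω) :
    expPassage lam S s ω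
      = (∑' n : ℕ, (passEvent S s n).indicator
            (fun _ => ENNReal.ofReal (Real.exp (lam * n))) ω)
        + (noPass S s).indicator (fun _ => (⊤ : ℝ≥0∞)) ω := by
  by_cases h : ∃ n : ℕ, 1 ≤ n ∧ s + S n ω ≤ 0
  · have hN : ω ∈ passEvent S s (Nat.find h) :=
      ⟨Nat.find_spec h, fun m hm => Nat.find_min h hm⟩
    have hne : ∀ n : ℕ, n ≠ Nat.find h → ω ∉ passEvent S s n := by
      intro n hn hmem
      rcases lt_or_gt_of_ne hn with hlt | hgt
      · exact Nat.find_min h hlt hmem.1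
      · exact hmem.2 _ hgt (Nat.find_spec h)
    have hnp : ω ∉ noPass S s := fun hc => hc h
    rw [expPassage, dif_pos h, Set.indicator_of_notMem hnp,
      tsum_eq_single (Nat.find h) (fun n hn => Set.indicator_of_notMem (hne n hn) _),
      Set.indicator_of_mem hN, add_zero]
  · have : ∀ n : ℕ, ω ∉ passEvent S s n := fun n hmem => h ⟨n, hmem.1⟩
    have hmem : ω ∈ noPass S s := h
    rw [expPassage, dif_neg h, Set.indicator_of_mem hmem]
    simp [Set.indicator_of_notMem (this _)]

lemma measurableSet_passEvent {m' : MeasurableSpace Ω} {S : ℕ → Ω → ℝ}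
    (hS : ∀ n, Measurable[m'] (S n)) (s : ℝ) (n : ℕ) :
    MeasurableSet[m'] (passEvent S s n) := by
  have h1 : ∀ m : ℕ, MeasurableSet[m'] {ω | 1 ≤ m ∧ s + S m ω ≤ 0} := by
    intro m
    by_cases hm : 1 ≤ m
    · simp only [hm, true_and]
      exact measurableSet_le ((measurable_const.add (hS m))) measurable_const
    · simp [hm]
  have : passEvent S s n
      = {ω | 1 ≤ n ∧ s + S n ω ≤ 0} ∩ ⋂ m ∈ Finset.range n, {ω | 1 ≤ m ∧ s + S m ω ≤ 0}ᶜ := by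
    ext ω
    simp [passEvent, Set.mem_iInter, Finset.mem_range]
  rw [this]
  exact (h1 n).inter (MeasurableSet.iInter fun m =>
    MeasurableSet.iInter fun _ => (h1 m).compl)

lemma measurableSet_noPass {m' : MeasurableSpace Ω} {S : ℕ → Ω → ℝ}
    (hS : ∀ n, Measurable[m'] (S n)) (s : ℝ) :
    MeasurableSet[m'] (noPass S s) := by
  have : noPass S s = (⋃ n : ℕ, {ω | 1 ≤ n ∧ s + S n ω ≤ 0})ᶜ := by
    ext ω; simp [noPass]
  rw [this]
  refine (MeasurableSet.iUnion fun n => ?_).compl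
  by_cases hn : 1 ≤ n
  · simp only [hn, true_and]
    exact measurableSet_le ((measurable_const.add (hS n))) measurable_const
  · simp [hn]

lemma measurable_expPassage {m' : MeasurableSpace Ω} {S : ℕ → Ω → ℝ}
    (hS : ∀ n, Measurable[m'] (S n)) (lam s : ℝ) :
    Measurable[m'] (expPassage lam S s) := by
  have : expPassage lam S s = fun ω =>
      (∑' n : ℕ, (passEvent S s n).indicator
            (fun _ => ENNReal.ofReal (Real.exp (lam * n))) ω)
        + (noPass S s).indicator (fun _ => (⊤ : ℝ≥0∞)) ω := by
    funext ω; exact expPassage_eq lam S s ω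
  rw [this]
  exact (Measurable.ennreal_tsum fun n =>
      measurable_const.indicator (measurableSet_passEvent hS s n)).add
    (measurable_const.indicator (measurableSet_noPass hS s))

lemma one_le_expPassage {lam : ℝ} (hlam : 0 ≤ lam) (S : ℕ → Ω → ℝ) (s : ℝ) (ω : Ω) :
    1 ≤ expPassage lam S s ω := by
  rw [expPassage]
  split
  · rw [← ENNReal.ofReal_one]
    exact ENNReal.ofReal_le_ofReal (by
      rw [← Real.exp_zero]
      exact Real.exp_le_exp.2 (mul_nonneg hlam (Nat.cast_nonneg _)))
  · exact le_top

variable [MeasurableSpace Ω] (P : Measure Ω) [IsProbabilityMeasure P]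

lemma lintegral_expPassage {S : ℕ → Ω → ℝ} (hS : ∀ n, Measurable (S n)) (lam s : ℝ) :
    ∫⁻ ω, expPassage lam S s ω ∂P
      = (∑' n : ℕ, ENNReal.ofReal (Real.exp (lam * n)) * P (passEvent S s n))
        + ⊤ * P (noPass S s) := by
  simp only [expPassage_eq lam S s]
  rw [lintegral_add_right _ (measurable_const.indicator (measurableSet_noPass hS s)),
    lintegral_tsum (fun n =>
      (measurable_const.indicator (measurableSet_passEvent hS s n)).aemeasurable),
    lintegral_indicator_const (measurableSet_noPass hS s)]
  congr 1
  exact tsum_congr fun n => lintegral_indicator_const (measurableSet_passEvent hS s n) _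

lemma sum_passEvent_add_noPass {S : ℕ → Ω → ℝ} (hS : ∀ n, Measurable (S n)) (s : ℝ) :
    (∑' n : ℕ, P (passEvent S s n)) + P (noPass S s) = 1 := by
  have hdisj : Pairwise (Function.onFun Disjoint fun n => passEvent S s n) := by
    intro n m hnm
    wlog h : n < m generalizing n m
    · exact (this hnm.symm (by omega)).symm
    refine Set.disjoint_left.2 fun ω hn hm => ?_
    exact hm.2 n h hn.1
  rw [← measure_iUnion hdisj (fun n => measurableSet_passEvent hS s n)]
  have hU : (⋃ n, passEvent S s n) = (noPass S s)ᶜ := by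
    ext ω
    simp only [Set.mem_iUnion, noPass, Set.mem_compl_iff, Set.mem_setOf_eq, not_not]
    constructor
    · rintro ⟨n, hn⟩; exact ⟨n, hn.1⟩
    · intro h
      exact ⟨Nat.find h, Nat.find_spec h, fun m hm => Nat.find_min h hm⟩
  rw [hU, prob_compl_eq_one_sub (measurableSet_noPass hS s)]
  have hle : P (noPass S s) ≤ 1 := prob_le_one
  rw [tsub_add_cancel_of_le hle]

end FPaux
section Part2
namespace FPaux
variable {Ω : Type*} [MeasurableSpace Ω] (P : Measure Ω) [IsProbabilityMeasure P]
  (X : ℕ → Ω → ℝ) (hmeas : ∀ i, Measurable (X i))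
  (hindep : iIndepFun X P)
  (hident : ∀ i j : ℕ, Measure.map (X i) P = Measure.map (X j) P)

include hmeas in
lemma measurable_walk (c n : ℕ) : Measurable (walk X c n) :=
  Finset.measurable_sum _ fun i _ => hmeas _

include hmeas hindep hident in
lemma map_tuple (c n : ℕ) :
    Measure.map (fun ω (i : Fin n) => X (c + i) ω) P
      = Measure.pi (fun _ : Fin n => Measure.map (X 0) P) := by
  haveI : IsProbabilityMeasure (Measure.map (X 0) P) :=
    Measure.isProbabilityMeasure_map (hmeas 0).aemeasurable
  symm
  apply Measure.pi_eq
  intro s hs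
  have htuple : Measurable (fun ω (i : Fin n) => X (c + i) ω) :=
    measurable_pi_iff.2 fun i => hmeas _
  rw [Measure.map_apply htuple (MeasurableSet.univ_pi hs)]
  have hpre : (fun ω (i : Fin n) => X (c + i) ω) ⁻¹' Set.univ.pi s
      = ⋂ i : Fin n, X (c + i) ⁻¹' s i := by
    ext ω; simp [Set.mem_univ_pi]
  rw [hpre]
  classical
  set sets : ℕ → Set ℝ := fun j =>
    if h : c ≤ j ∧ j - c < n then s ⟨j - c, h.2⟩ else Set.univ with hsets
  have hsets_eq : ∀ i : Fin n, sets (c + i) = s i := by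
    intro i
    have h : c ≤ c + (i : ℕ) ∧ c + (i : ℕ) - c < n := ⟨Nat.le_add_right _ _, by omega⟩
    simp only [hsets]
    rw [dif_pos h]
    exact congrArg s (Fin.ext (by simp))
  set T : Finset ℕ := Finset.image (fun i : Fin n => c + (i : ℕ)) Finset.univ with hT
  have hinj : ∀ i ∈ (Finset.univ : Finset (Fin n)), ∀ j ∈ (Finset.univ : Finset (Fin n)),
      c + (i : ℕ) = c + (j : ℕ) → i = j := by
    intro i _ j _ h
    apply Fin.ext
    omega
  have hInter : (⋂ i : Fin n, X (c + i) ⁻¹' s i) = ⋂ j ∈ T, X j ⁻¹' sets j := by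
    rw [hT]
    ext ω
    simp only [Set.mem_iInter, Finset.mem_image, Finset.mem_univ, true_and]
    constructor
    · rintro h j ⟨i, rfl⟩
      rw [hsets_eq i]; exact h i
    · intro h i
      rw [← hsets_eq i]; exact h _ ⟨i, rfl⟩
  have hsets_meas : ∀ j ∈ T, MeasurableSet (sets j) := by
    intro j _
    simp only [hsets]
    split
    · exact hs _
    · exact MeasurableSet.univ
  rw [hInter, hindep.measure_inter_preimage_eq_mul T hsets_meas,
    Finset.prod_image hinj]
  refine Finset.prod_congr rfl fun i _ => ?_
  rw [hsets_eq i, ← Measure.map_apply (hmeas _) (hs i), hident (c + i) 0]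

include hmeas hindep hident in
lemma measure_passEvent_shift (c : ℕ) (b : ℝ) (n : ℕ) :
    P (passEvent (walk X c) b n) = P (passEvent (walk X 1) b n) := by
  classical
  set e : (Fin n → ℝ) → ℕ → ℝ := fun x i => if h : i < n then x ⟨i, h⟩ else 0 with he
  set Sx : ℕ → (Fin n → ℝ) → ℝ := fun m x => ∑ i ∈ Finset.range m, e x i with hSx
  have hSxmeas : ∀ m, Measurable (Sx m) := by
    intro m
    refine Finset.measurable_sum _ fun i _ => ?_
    rw [he]
    simp only
    split
    · exact measurable_pi_apply _
    · exact measurable_const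
  have hB : MeasurableSet (passEvent Sx b n) := measurableSet_passEvent hSxmeas b n
  have hkey : ∀ d : ℕ, passEvent (walk X d) b n
      = (fun ω (i : Fin n) => X (d + i) ω) ⁻¹' passEvent Sx b n := by
    intro d
    have hsum : ∀ (ω : Ω), ∀ m ≤ n, Sx m (fun i : Fin n => X (d + i) ω) = walk X d m ω := by
      intro ω m hm
      rw [hSx, walk]
      refine Finset.sum_congr rfl fun i hi => ?_
      have : i < n := lt_of_lt_of_le (Finset.mem_range.1 hi) hm
      rw [he]
      simp [this]
    ext ω
    simp only [passEvent, Set.mem_setOf_eq, Set.mem_preimage]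
    rw [hsum ω n le_rfl]
    constructor
    · rintro ⟨h1, h2⟩
      exact ⟨h1, fun m hm hc => h2 m hm ⟨hc.1, by rw [← hsum ω m hm.le]; exact hc.2⟩⟩
    · rintro ⟨h1, h2⟩
      exact ⟨h1, fun m hm hc => h2 m hm ⟨hc.1, by rw [hsum ω m hm.le]; exact hc.2⟩⟩
  have htuple : ∀ d : ℕ, Measurable (fun ω (i : Fin n) => X (d + i) ω) :=
    fun d => measurable_pi_iff.2 fun i => hmeas _
  rw [hkey c, hkey 1,
    ← Measure.map_apply (htuple c) hB, ← Measure.map_apply (htuple 1) hB,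
    map_tuple P X hmeas hindep hident c n, map_tuple P X hmeas hindep hident 1 n]

include hmeas hindep hident in
lemma measure_noPass_shift (c : ℕ) (b : ℝ) :
    P (noPass (walk X c) b) = P (noPass (walk X 1) b) := by
  have h1 := sum_passEvent_add_noPass P (S := walk X c) (measurable_walk X hmeas c) b
  have h2 := sum_passEvent_add_noPass P (S := walk X 1) (measurable_walk X hmeas 1) b
  have hsum : (∑' m : ℕ, P (passEvent (walk X c) b m))
      = ∑' m : ℕ, P (passEvent (walk X 1) b m) :=
    tsum_congr fun m => measure_passEvent_shift P X hmeas hindep hident c b m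
  rw [hsum] at h1
  have hfin : (∑' m : ℕ, P (passEvent (walk X 1) b m)) ≠ ⊤ := by
    intro hc
    rw [hc] at h2
    simp at h2
  exact (ENNReal.add_right_inj hfin).1 (h1.trans h2.symm)

include hmeas hindep hident in
lemma lintegral_expPassage_shift (lam : ℝ) (c : ℕ) (b : ℝ) :
    ∫⁻ ω, expPassage lam (walk X c) b ω ∂P
      = ∫⁻ ω, expPassage lam (walk X 1) b ω ∂P := by
  rw [lintegral_expPassage P (measurable_walk X hmeas c) lam b,
    lintegral_expPassage P (measurable_walk X hmeas 1) lam b,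
    measure_noPass_shift P X hmeas hindep hident c b]
  congr 1
  exact tsum_congr fun n => by
    rw [measure_passEvent_shift P X hmeas hindep hident c b n]

end FPaux
end Part2
section Part3
namespace FPaux
variable {Ω : Type*}

lemma measurableSet_passEvent' {m' : MeasurableSpace Ω} {S : ℕ → Ω → ℝ} {n : ℕ}
    (hS : ∀ m ≤ n, Measurable[m'] (S m)) (s : ℝ) :
    MeasurableSet[m'] (passEvent S s n) := by
  have h1 : ∀ m ≤ n, MeasurableSet[m'] {ω | 1 ≤ m ∧ s + S m ω ≤ 0} := by
    intro m hm
    by_cases h : 1 ≤ m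
    · simp only [h, true_and]
      exact measurableSet_le ((measurable_const.add (hS m hm))) measurable_const
    · simp [h]
  have : passEvent S s n
      = {ω | 1 ≤ n ∧ s + S n ω ≤ 0} ∩ ⋂ m ∈ Finset.range n, {ω | 1 ≤ m ∧ s + S m ω ≤ 0}ᶜ := by
    ext ω
    simp [passEvent, Set.mem_iInter, Finset.mem_range]
  rw [this]
  refine (h1 n le_rfl).inter (MeasurableSet.iInter fun m => MeasurableSet.iInter fun hm => ?_)
  exact (h1 m (le_of_lt (Finset.mem_range.1 hm))).compl

/-- σ-algebra generated by `X 0, ..., X n`. -/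
def sigmaIic (X : ℕ → Ω → ℝ) (n : ℕ) : MeasurableSpace Ω :=
  ⨆ i ∈ Set.Iic n, MeasurableSpace.comap (X i) inferInstance

/-- σ-algebra generated by `X (n+1), X (n+2), ...`. -/
def sigmaIoi (X : ℕ → Ω → ℝ) (n : ℕ) : MeasurableSpace Ω :=
  ⨆ i ∈ Set.Ioi n, MeasurableSpace.comap (X i) inferInstance

variable [mΩ : MeasurableSpace Ω] (P : Measure Ω) [IsProbabilityMeasure P]
  (X : ℕ → Ω → ℝ) (hmeas : ∀ i, Measurable (X i))
  (hindep : iIndepFun X P)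
  (hident : ∀ i j : ℕ, Measure.map (X i) P = Measure.map (X j) P)

include hmeas hindep hident in
lemma step (lam : ℝ) (hlam : 0 ≤ lam) (a b : ℝ) :
    ∫⁻ ω, expPassage lam (walk X 1) (a + b) ω ∂P
      ≤ (∫⁻ ω, expPassage lam (walk X 1) a ω ∂P)
        * ∫⁻ ω, expPassage lam (walk X 1) b ω ∂P := by
  classical
  set E : ℕ → Set Ω := fun n => passEvent (walk X 1) a n with hE
  set N : Set Ω := noPass (walk X 1) a with hN
  set c : ℕ → ℝ≥0∞ := fun n => ENNReal.ofReal (Real.exp (lam * n)) with hc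
  set g : ℕ → Ω → ℝ≥0∞ := fun n => expPassage lam (walk X (n + 1)) b with hg
  set Ib : ℝ≥0∞ := ∫⁻ ω, expPassage lam (walk X 1) b ω ∂P with hIb
  have hwalk_meas : ∀ d m : ℕ, Measurable (walk X d m) := fun d m => measurable_walk X hmeas d m
  have hEmeas : ∀ n, MeasurableSet (E n) :=
    fun n => measurableSet_passEvent (hwalk_meas 1) a n
  have hNmeas : MeasurableSet N := measurableSet_noPass (hwalk_meas 1) a
  have hgmeas : ∀ n, Measurable (g n) :=
    fun n => measurable_expPassage (hwalk_meas (n + 1)) lam b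
  -- decomposition of the walk
  have hwalk_add : ∀ (n m : ℕ) (ω : Ω),
      walk X 1 (n + m) ω = walk X 1 n ω + walk X (n + 1) m ω := by
    intro n m ω
    rw [walk, walk, walk, Finset.sum_range_add]
    congr 1
    refine Finset.sum_congr rfl fun i _ => ?_
    congr 1
    omega
  -- pointwise bound
  have hpt : ∀ ω, expPassage lam (walk X 1) (a + b) ω
      ≤ (∑' n : ℕ, (E n).indicator (fun _ => c n) ω * g n ω)
        + N.indicator (fun _ => (⊤ : ℝ≥0∞)) ω := by
    intro ω
    by_cases hω : ∃ n : ℕ, 1 ≤ n ∧ a + walk X 1 n ω ≤ 0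
    · set n := Nat.find hω with hn
      have hmem : ω ∈ E n := ⟨Nat.find_spec hω, fun m hm => Nat.find_min hω hm⟩
      have hbound : expPassage lam (walk X 1) (a + b) ω ≤ c n * g n ω := by
        by_cases hb' : ∃ m : ℕ, 1 ≤ m ∧ b + walk X (n + 1) m ω ≤ 0
        · set m := Nat.find hb' with hm
          have hgn : g n ω = ENNReal.ofReal (Real.exp (lam * m)) := by
            rw [hg]; simp only [expPassage]; rw [dif_pos hb']
          have hhit : 1 ≤ n + m ∧ (a + b) + walk X 1 (n + m) ω ≤ 0 := by
            constructor
            · have := (Nat.find_spec hω).1; omega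
            · have h1 := (Nat.find_spec hω).2
              have h2 := (Nat.find_spec hb').2
              rw [hwalk_add n m ω]
              linarith
          have hex : ∃ j : ℕ, 1 ≤ j ∧ (a + b) + walk X 1 j ω ≤ 0 := ⟨n + m, hhit⟩
          have hfind : Nat.find hex ≤ n + m := Nat.find_le hhit
          rw [expPassage, dif_pos hex, hgn, hc]
          rw [← ENNReal.ofReal_mul (Real.exp_nonneg _), ← Real.exp_add]
          apply ENNReal.ofReal_le_ofReal
          apply Real.exp_le_exp.2
          have : ((Nat.find hex : ℕ) : ℝ) ≤ ((n : ℕ) : ℝ) + ((m : ℕ) : ℝ) := by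
            push_cast
            exact_mod_cast Nat.cast_le.2 hfind
          calc lam * (Nat.find hex : ℝ) ≤ lam * ((n : ℝ) + (m : ℝ)) :=
                mul_le_mul_of_nonneg_left this hlam
            _ = lam * n + lam * m := by ring
        · have hgn : g n ω = ⊤ := by
            rw [hg]; simp only [expPassage]; rw [dif_neg hb']
          rw [hgn, ENNReal.mul_top]
          · exact le_top
          · rw [hc]
            exact (ENNReal.ofReal_pos.2 (Real.exp_pos _)).ne'
      calc expPassage lam (walk X 1) (a + b) ω ≤ c n * g n ω := hbound
        _ = (E n).indicator (fun _ => c n) ω * g n ω := by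
            rw [Set.indicator_of_mem hmem]
        _ ≤ ∑' j : ℕ, (E j).indicator (fun _ => c j) ω * g j ω :=
            ENNReal.le_tsum n
        _ ≤ _ := le_self_add
    · have hmem : ω ∈ N := hω
      rw [Set.indicator_of_mem hmem]
      simp
  -- integrate
  have hterm_meas : ∀ n : ℕ, Measurable fun ω => (E n).indicator (fun _ => c n) ω * g n ω :=
    fun n => (measurable_const.indicator (hEmeas n)).mul (hgmeas n)
  have hint : ∫⁻ ω, expPassage lam (walk X 1) (a + b) ω ∂P
      ≤ (∑' n : ℕ, ∫⁻ ω, (E n).indicator (fun _ => c n) ω * g n ω ∂P) + ⊤ * P N := by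
    calc ∫⁻ ω, expPassage lam (walk X 1) (a + b) ω ∂P
        ≤ ∫⁻ ω, ((∑' n : ℕ, (E n).indicator (fun _ => c n) ω * g n ω)
            + N.indicator (fun _ => (⊤ : ℝ≥0∞)) ω) ∂P := lintegral_mono hpt
      _ = (∑' n : ℕ, ∫⁻ ω, (E n).indicator (fun _ => c n) ω * g n ω ∂P) + ⊤ * P N := by
          rw [lintegral_add_right _ (measurable_const.indicator hNmeas),
            lintegral_tsum (fun n => (hterm_meas n).aemeasurable),
            lintegral_indicator_const hNmeas]
  -- independence: each term factorizes
  have hfact : ∀ n : ℕ, ∫⁻ ω, (E n).indicator (fun _ => c n) ω * g n ω ∂P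
      = (c n * P (E n)) * Ib := by
    intro n
    have hle : ∀ i : ℕ, MeasurableSpace.comap (X i) inferInstance ≤ mΩ :=
      fun i => (hmeas i).comap_le
    have hMf_le : sigmaIic X n ≤ mΩ := iSup₂_le fun i _ => hle i
    have hMg_le : sigmaIoi X n ≤ mΩ := iSup₂_le fun i _ => hle i
    have hindep' : Indep (sigmaIic X n) (sigmaIoi X n) P :=
      ProbabilityTheory.indep_iSup_of_disjoint hle
        ((iIndepFun_iff_iIndep _ _ _).1 hindep) (Set.Iic_disjoint_Ioi le_rfl)
    have hXf : ∀ i ∈ Set.Iic n, Measurable[sigmaIic X n] (X i) := by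
      intro i hi
      exact Measurable.of_comap_le (le_iSup₂_of_le i hi le_rfl)
    have hXg : ∀ i ∈ Set.Ioi n, Measurable[sigmaIoi X n] (X i) := by
      intro i hi
      exact Measurable.of_comap_le (le_iSup₂_of_le i hi le_rfl)
    have hEf : MeasurableSet[sigmaIic X n] (E n) := by
      refine measurableSet_passEvent' (fun m hm => ?_) a
      exact Finset.measurable_sum _ fun i hi => hXf (1 + i) (by
        simp only [Set.mem_Iic]
        have := Finset.mem_range.1 hi
        omega)
    have hgg : Measurable[sigmaIoi X n] (g n) := by
      refine measurable_expPassage (fun m => ?_) lam b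
      exact Finset.measurable_sum _ fun i _ => hXg (n + 1 + i) (by
        simp only [Set.mem_Ioi]; omega)
    have hprod := lintegral_mul_eq_lintegral_mul_lintegral_of_independent_measurableSpace
      (f := (E n).indicator (fun _ => c n)) (g := g n)
      hMf_le hMg_le hindep'
      ((measurable_const : @Measurable Ω ℝ≥0∞ (sigmaIic X n) _ fun _ => c n).indicator hEf) hgg (μ := P)
    rw [hprod, lintegral_indicator_const (hEmeas n),
      hg, lintegral_expPassage_shift P X hmeas hindep hident lam (n + 1) b]
  -- put it together
  have hIb_one : 1 ≤ Ib := by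
    rw [hIb]
    calc (1 : ℝ≥0∞) = ∫⁻ _, 1 ∂P := by simp
      _ ≤ _ := lintegral_mono fun ω => one_le_expPassage hlam _ _ ω
  calc ∫⁻ ω, expPassage lam (walk X 1) (a + b) ω ∂P
      ≤ (∑' n : ℕ, ∫⁻ ω, (E n).indicator (fun _ => c n) ω * g n ω ∂P) + ⊤ * P N := hint
    _ = (∑' n : ℕ, (c n * P (E n)) * Ib) + ⊤ * P N := by
        congr 1; exact tsum_congr hfact
    _ = (∑' n : ℕ, c n * P (E n)) * Ib + ⊤ * P N := by rw [ENNReal.tsum_mul_right]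
    _ ≤ (∑' n : ℕ, c n * P (E n)) * Ib + (⊤ * P N) * Ib := by
        exact add_le_add_right (le_mul_of_one_le_right zero_le hIb_one) _
    _ = ((∑' n : ℕ, c n * P (E n)) + ⊤ * P N) * Ib := by rw [add_mul]
    _ = (∫⁻ ω, expPassage lam (walk X 1) a ω ∂P) * Ib := by
        rw [lintegral_expPassage P (hwalk_meas 1) lam a]

end FPaux
end Part3
/-- Submultiplicativity in the starting level of exponential moments of first passage
times of a random walk with i.i.d. increments:
`E[e^{λ T(k s₀)}] ≤ (E[e^{λ T(s₀)}])^k` for `λ ≥ 0`, `s₀ > 0`, `k ≥ 1`. -/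
theorem first_passage_time_exp_moment_submultiplicative
    {Ω : Type*} [MeasurableSpace Ω] (P : Measure Ω) [IsProbabilityMeasure P]
    (X : ℕ → Ω → ℝ) (hmeas : ∀ i, Measurable (X i))
    (hindep : iIndepFun X P)
    (hident : ∀ i j : ℕ, Measure.map (X i) P = Measure.map (X j) P)
    (lam : ℝ) (hlam : 0 ≤ lam) (s₀ : ℝ) (hs₀ : 0 < s₀) (k : ℕ) (hk : 1 ≤ k) :
    ∫⁻ ω, expPassage lam
        (fun n ω => ∑ i ∈ Finset.range n, X (i + 1) ω) ((k : ℝ) * s₀) ω ∂P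
      ≤ (∫⁻ ω, expPassage lam
          (fun n ω => ∑ i ∈ Finset.range n, X (i + 1) ω) s₀ ω ∂P) ^ k := by
  have hwalk : (fun n ω => ∑ i ∈ Finset.range n, X (i + 1) ω) = FPaux.walk X 1 := by
    funext n ω
    exact Finset.sum_congr rfl fun i _ => by rw [add_comm i 1]
  rw [hwalk]
  induction k, hk using Nat.le_induction with
  | base =>
    simp only [Nat.cast_one, one_mul, pow_one]
    exact le_rfl
  | succ k hk ih =>
    have hcast : ((k + 1 : ℕ) : ℝ) * s₀ = s₀ + (k : ℝ) * s₀ := by push_cast; ring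
    rw [hcast]
    calc ∫⁻ ω, expPassage lam (FPaux.walk X 1) (s₀ + (k : ℝ) * s₀) ω ∂P
        ≤ (∫⁻ ω, expPassage lam (FPaux.walk X 1) s₀ ω ∂P)
            * ∫⁻ ω, expPassage lam (FPaux.walk X 1) ((k : ℝ) * s₀) ω ∂P :=
          FPaux.step P X hmeas hindep hident lam hlam s₀ ((k : ℝ) * s₀)
      _ ≤ (∫⁻ ω, expPassage lam (FPaux.walk X 1) s₀ ω ∂P)
            * (∫⁻ ω, expPassage lam (FPaux.walk X 1) s₀ ω ∂P) ^ k :=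
          mul_le_mul_right ih _
      _ = (∫⁻ ω, expPassage lam (FPaux.walk X 1) s₀ ω ∂P) ^ (k + 1) :=
          (pow_succ' _ _).symm
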